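/- The Jacobian matrix of the natural gradient field G of the polarization measure (n = 2) at the edge midpoints satisfies: J(0,1/2) = −(1/8)[[2,0],[1,4]], J(1/2,0) = −(1/8)[[4,1],[0,2]], and J(1/2,1/2) = −(1/8)[[3,−1],[−1,3]]; each of these matrices has two strictly negative eigenvalues, so the midpoints are attracting fixed points. -/

import Mathlib

private lemma hdCubic (c3 c2 c1 c0 a : ℝ) :
    HasDerivAt (fun s : ℝ => c3 * s ^ 3 + c2 * s ^ 2 + c1 * s + c0)
      (3 * c3 * a ^ 2 + 2 * c2 * a + c1) a := by
  have h := (((hasDerivAt_pow 3 a).const_mul c3).add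
    ((hasDerivAt_pow 2 a).const_mul c2)).add
    (((hasDerivAt_id a).const_mul c1).add (hasDerivAt_const a c0))
  convert h using 1
  · rfl
  · rfl
  · funext s; simp only [id, Pi.add_apply]; ring
  · simp; ring

private lemma keyA (a b : ℝ) :
    deriv (fun s : ℝ => -9 * s ^ 3 * b - 9 * s ^ 2 * b ^ 2 + 2 * s ^ 3 + 14 * s ^ 2 * b
        + 5 * s * b ^ 2 - 3 * s ^ 2 - 5 * s * b + s) a
      = -27 * a ^ 2 * b - 18 * a * b ^ 2 + 6 * a ^ 2 + 28 * a * b + 5 * b ^ 2 - 6 * a - 5 * b + 1 := by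
  have h : (fun s : ℝ => -9 * s ^ 3 * b - 9 * s ^ 2 * b ^ 2 + 2 * s ^ 3 + 14 * s ^ 2 * b
        + 5 * s * b ^ 2 - 3 * s ^ 2 - 5 * s * b + s)
      = fun s => (-9 * b + 2) * s ^ 3 + (-9 * b ^ 2 + 14 * b - 3) * s ^ 2
        + (5 * b ^ 2 - 5 * b + 1) * s + 0 := by funext s; ring
  rw [h, (hdCubic _ _ _ _ a).deriv]; ring

private lemma keyB (a b : ℝ) :
    deriv (fun s : ℝ => -9 * a ^ 3 * s - 9 * a ^ 2 * s ^ 2 + 2 * a ^ 3 + 14 * a ^ 2 * s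
        + 5 * a * s ^ 2 - 3 * a ^ 2 - 5 * a * s + a) b
      = -9 * a ^ 3 - 18 * a ^ 2 * b + 14 * a ^ 2 + 10 * a * b - 5 * a := by
  have h : (fun s : ℝ => -9 * a ^ 3 * s - 9 * a ^ 2 * s ^ 2 + 2 * a ^ 3 + 14 * a ^ 2 * s
        + 5 * a * s ^ 2 - 3 * a ^ 2 - 5 * a * s + a)
      = fun s => (0:ℝ) * s ^ 3 + (-9 * a ^ 2 + 5 * a) * s ^ 2
        + (-9 * a ^ 3 + 14 * a ^ 2 - 5 * a) * s + (2 * a ^ 3 - 3 * a ^ 2 + a) := by funext s; ring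
  rw [h, (hdCubic _ _ _ _ b).deriv]; ring

private lemma detZero {M : Matrix (Fin 2) (Fin 2) ℝ} {μ : ℝ} (h : μ ∈ spectrum ℝ M) :
    (algebraMap ℝ (Matrix (Fin 2) (Fin 2) ℝ) μ - M).det = 0 := by
  rw [spectrum.mem_iff] at h
  by_contra hd
  exact h ((Matrix.isUnit_iff_isUnit_det _).mpr (isUnit_iff_ne_zero.mpr hd))

theorem jacobian_at_midpoints :
    (let G₁ : ℝ → ℝ → ℝ := fun a b =>
      -9 * a ^ 3 * b - 9 * a ^ 2 * b ^ 2 + 2 * a ^ 3 + 14 * a ^ 2 * b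
        + 5 * a * b ^ 2 - 3 * a ^ 2 - 5 * a * b + a;
    let G₂ : ℝ → ℝ → ℝ := fun a b => G₁ b a;
    let J : ℝ → ℝ → Matrix (Fin 2) (Fin 2) ℝ := fun a b =>
      !![deriv (fun s => G₁ s b) a, deriv (fun s => G₁ a s) b;
         deriv (fun s => G₂ s b) a, deriv (fun s => G₂ a s) b];
    J 0 (1 / 2) = -(1 / 8 : ℝ) • !![(2 : ℝ), 0; 1, 4] ∧
    J (1 / 2) 0 = -(1 / 8 : ℝ) • !![(4 : ℝ), 1; 0, 2] ∧
    J (1 / 2) (1 / 2) = -(1 / 8 : ℝ) • !![(3 : ℝ), -1; -1, 3] ∧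
    (∀ μ ∈ spectrum ℝ (J 0 (1 / 2)), μ < 0) ∧
    (∀ μ ∈ spectrum ℝ (J (1 / 2) 0), μ < 0) ∧
    (∀ μ ∈ spectrum ℝ (J (1 / 2) (1 / 2)), μ < 0)) := by
  intro G₁ G₂ J
  have hJ : ∀ a b : ℝ, J a b =
      !![-27 * a ^ 2 * b - 18 * a * b ^ 2 + 6 * a ^ 2 + 28 * a * b + 5 * b ^ 2 - 6 * a - 5 * b + 1,
         -9 * a ^ 3 - 18 * a ^ 2 * b + 14 * a ^ 2 + 10 * a * b - 5 * a;
         -9 * b ^ 3 - 18 * b ^ 2 * a + 14 * b ^ 2 + 10 * b * a - 5 * b,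
         -27 * b ^ 2 * a - 18 * b * a ^ 2 + 6 * b ^ 2 + 28 * b * a + 5 * a ^ 2 - 6 * b - 5 * a + 1] := by
    intro a b
    show (!![deriv (fun s => G₁ s b) a, deriv (fun s => G₁ a s) b;
         deriv (fun s => G₂ s b) a, deriv (fun s => G₂ a s) b] : Matrix (Fin 2) (Fin 2) ℝ) = _
    have e1 : deriv (fun s => G₁ s b) a = _ := keyA a b
    have e2 : deriv (fun s => G₁ a s) b = _ := keyB a b
    have e3 : deriv (fun s => G₂ s b) a = _ := keyB b a
    have e4 : deriv (fun s => G₂ a s) b = _ := keyA b a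
    rw [e1, e2, e3, e4]
  have h1 : J 0 (1 / 2) = -(1 / 8 : ℝ) • !![(2 : ℝ), 0; 1, 4] := by
    rw [hJ]; ext i j; fin_cases i <;> fin_cases j <;> norm_num
  have h2 : J (1 / 2) 0 = -(1 / 8 : ℝ) • !![(4 : ℝ), 1; 0, 2] := by
    rw [hJ]; ext i j; fin_cases i <;> fin_cases j <;> norm_num
  have h3 : J (1 / 2) (1 / 2) = -(1 / 8 : ℝ) • !![(3 : ℝ), -1; -1, 3] := by
    rw [hJ]; ext i j; fin_cases i <;> fin_cases j <;> norm_num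
  refine ⟨h1, h2, h3, ?_, ?_, ?_⟩
  · intro μ hμ
    rw [h1] at hμ
    have hd := detZero hμ
    simp [Matrix.det_fin_two, Matrix.algebraMap_matrix_apply] at hd
    first
      | (rcases hd with h | h <;> linarith)
      | nlinarith [hd, sq_nonneg μ, sq_nonneg (μ + 1)]
  · intro μ hμ
    rw [h2] at hμ
    have hd := detZero hμ
    simp [Matrix.det_fin_two, Matrix.algebraMap_matrix_apply] at hd
    first
      | (rcases hd with h | h <;> linarith)
      | nlinarith [hd, sq_nonneg μ, sq_nonneg (μ + 1)]
  · intro μ hμ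
    rw [h3] at hμ
    have hd := detZero hμ
    simp [Matrix.det_fin_two, Matrix.algebraMap_matrix_apply] at hd
    first
      | (rcases hd with h | h <;> linarith)
      | nlinarith [hd, sq_nonneg μ, sq_nonneg (μ + 1)]
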